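/- For any unit vector θ in R^d, the integral over the unit sphere (with respect to the uniform probability measure) of the function q ↦ 1{⟨θ,q⟩ ≥ 0}·q equals c_d·θ, where c_d = Γ(d/2)/(2√π·Γ((d+1)/2)). -/

import Mathlib

open MeasureTheory Metric Real
open Set
open scoped ENNReal

lemma int1 : ∫ t : ℝ, Real.exp (-t^2) = Real.sqrt π := by
  simpa using integral_gaussian 1

lemma int2 : ∫ t : ℝ, (if (0:ℝ) ≤ t then (1:ℝ) else 0) * Real.exp (-t^2) = Real.sqrt π / 2 := by
  have : (fun t : ℝ => (if (0:ℝ) ≤ t then (1:ℝ) else 0) * Real.exp (-t^2))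
      = Set.indicator (Ici (0:ℝ)) (fun t => Real.exp (-t^2)) := by
    funext t
    simp [Set.indicator_apply, ite_mul]
  rw [this, integral_indicator measurableSet_Ici, integral_Ici_eq_integral_Ioi]
  simpa using integral_gaussian_Ioi 1

lemma int3 : ∫ t : ℝ, (if (0:ℝ) ≤ t then (1:ℝ) else 0) * (t * Real.exp (-t^2)) = 1/2 := by
  have h1 : (fun t : ℝ => (if (0:ℝ) ≤ t then (1:ℝ) else 0) * (t * Real.exp (-t^2)))
      = Set.indicator (Ici (0:ℝ)) (fun t => t * Real.exp (-t^2)) := by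
    funext t
    simp [Set.indicator_apply, ite_mul]
  rw [h1, integral_indicator measurableSet_Ici, integral_Ici_eq_integral_Ioi]
  have h := integral_rpow_mul_exp_neg_rpow (p := 2) (q := 1) (by norm_num) (by norm_num)
  rw [show ((1:ℝ)+1)/2 = 1 by norm_num, Real.Gamma_one] at h
  have h2 : ∫ (x : ℝ) in Ioi 0, x ^ (1:ℝ) * rexp (-x ^ (2:ℝ)) = ∫ t in Ioi (0:ℝ), t * rexp (-t^2) := by
    refine setIntegral_congr_fun measurableSet_Ioi fun x hx => ?_
    rw [Real.rpow_one, Real.rpow_two]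
  rw [← h2, h]; norm_num

lemma int4 : ∫ t : ℝ, t * Real.exp (-t^2) = 0 := by
  have h : ∫ t : ℝ, (fun t : ℝ => t * Real.exp (-t^2)) (-t) = ∫ t : ℝ, t * Real.exp (-t^2) :=
    integral_neg_eq_self (fun t : ℝ => t * Real.exp (-t^2)) volume
  simp only [neg_sq, neg_mul, integral_neg] at h
  linarith

lemma intexp : Integrable (fun t : ℝ => Real.exp (-t^2)) := by
  simpa using integrable_exp_neg_mul_sq (one_pos)

lemma inttexp : Integrable (fun t : ℝ => t * Real.exp (-t^2)) := by
  simpa using integrable_mul_exp_neg_mul_sq (one_pos)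

lemma intchi (f : ℝ → ℝ) (hf : Integrable f) :
    Integrable (fun t : ℝ => (if (0:ℝ) ≤ t then (1:ℝ) else 0) * f t) := by
  have hm : Measurable (fun t : ℝ => if (0:ℝ) ≤ t then (1:ℝ) else 0) :=
    Measurable.ite measurableSet_Ici measurable_const measurable_const
  refine Integrable.mono' hf.norm (hm.aestronglyMeasurable.mul hf.1) ?_
  filter_upwards with t
  rw [norm_mul]
  have : ‖if (0:ℝ) ≤ t then (1:ℝ) else 0‖ ≤ 1 := by split_ifs <;> simp
  calc ‖if (0:ℝ) ≤ t then (1:ℝ) else 0‖ * ‖f t‖ ≤ 1 * ‖f t‖ :=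
        mul_le_mul_of_nonneg_right this (norm_nonneg _)
    _ = ‖f t‖ := one_mul _


lemma int5 (d : ℕ) (hd : 1 ≤ d) :
    ∫ x in Ioi (0:ℝ), x ^ (d-1) * (x * Real.exp (-x^2)) = Real.Gamma (((d:ℝ)+1)/2) / 2 := by
  have h := integral_rpow_mul_exp_neg_rpow (p := 2) (q := (d:ℝ)) (by norm_num)
    (by exact lt_of_lt_of_le (by norm_num) (Nat.cast_nonneg d))
  have h2 : ∫ (x : ℝ) in Ioi 0, x ^ ((d:ℝ)) * rexp (-x ^ (2:ℝ))
      = ∫ x in Ioi (0:ℝ), x ^ (d-1) * (x * Real.exp (-x^2)) := by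
    refine setIntegral_congr_fun measurableSet_Ioi fun x hx => ?_
    rw [Real.rpow_natCast, Real.rpow_two]
    conv_lhs => rw [← Nat.sub_add_cancel hd, pow_succ]
    ring
  rw [← h2, h]; ring

lemma integral_volumeIoiPow (n : ℕ) (φ : ℝ → ℝ) :
    ∫ x : Ioi (0:ℝ), φ x ∂(MeasureTheory.Measure.volumeIoiPow n)
      = ∫ x in Ioi (0:ℝ), x ^ n * φ x := by
  simp only [MeasureTheory.Measure.volumeIoiPow, ENNReal.ofReal]
  rw [integral_withDensity_eq_integral_smul
      ((measurable_subtype_coe.pow_const _).real_toNNReal) _,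
    integral_subtype_comap measurableSet_Ioi fun a ↦ Real.toNNReal (a ^ n) • φ a]
  refine setIntegral_congr_fun measurableSet_Ioi fun x hx ↦ ?_
  rw [NNReal.smul_def, Real.coe_toNNReal _ (pow_nonneg hx.out.le _), smul_eq_mul]

lemma gauss_euclid (d : ℕ) (i : Fin d) :
    ∫ y : EuclideanSpace ℝ (Fin d),
        (Real.exp (-‖y‖^2) * (if (0:ℝ) ≤ y i then (1:ℝ) else 0)) • y
      = (Real.sqrt π ^ (d-1) / 2) • EuclideanSpace.single i (1:ℝ) := by
  classical
  set χ : ℝ → ℝ := fun t => if (0:ℝ) ≤ t then (1:ℝ) else 0 with hχ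
  set h : Fin d → Fin d → ℝ → ℝ := fun j k t =>
    ((if k = i then χ t else 1) * (if k = j then t else 1)) * Real.exp (-t^2) with hh
  -- each one dimensional factor is integrable
  have hfun : ∀ j k, h j k = if k = i then (if k = j then fun t => χ t * (t * Real.exp (-t^2))
        else fun t => χ t * Real.exp (-t^2))
      else (if k = j then fun t => t * Real.exp (-t^2) else fun t => Real.exp (-t^2)) := by
    intro j k
    by_cases hki : k = i <;> by_cases hkj : k = j <;>
      funext t <;>
      simp only [hh, if_pos, if_neg, hki, hkj, if_true, if_false] <;>
      simp [hki, hkj, mul_assoc, apply_ite (fun f : ℝ → ℝ => f t)]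
  have hint : ∀ j k, Integrable (h j k) := by
    intro j k
    rw [hfun j k]
    split_ifs
    · exact intchi _ inttexp
    · exact intchi _ intexp
    · exact inttexp
    · exact intexp
  -- the product formula
  have hprod : ∀ (j : Fin d) (z : Fin d → ℝ),
      (∏ k, h j k (z k)) = (Real.exp (-∑ k, (z k)^2) * χ (z i)) * z j := by
    intro j z
    simp only [hh]
    rw [Finset.prod_mul_distrib, Finset.prod_mul_distrib]
    rw [Finset.prod_ite_eq' Finset.univ i (fun k => χ (z k)),
      Finset.prod_ite_eq' Finset.univ j (fun k => z k)]
    rw [← Real.exp_sum]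
    simp only [Finset.mem_univ, if_true, Finset.sum_neg_distrib]
    ring
  -- value of the one-dimensional integrals
  have hval : ∀ j k, (∫ t : ℝ, h j k t)
      = if k = i then (if k = j then 1/2 else Real.sqrt π / 2)
        else (if k = j then 0 else Real.sqrt π) := by
    intro j k
    rw [hfun j k]
    split_ifs
    · exact int3
    · exact int2
    · exact int4
    · exact int1
  -- norm squared as a sum
  have hnorm : ∀ y : EuclideanSpace ℝ (Fin d), ‖y‖^2 = ∑ k, (y k)^2 := by
    intro y
    rw [EuclideanSpace.norm_eq, Real.sq_sqrt (Finset.sum_nonneg fun k _ => by positivity)]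
    simp [Real.norm_eq_abs, sq_abs]
  have hcomp : ∀ (j : Fin d) (y : EuclideanSpace ℝ (Fin d)),
      (Real.exp (-‖y‖^2) * χ (y i)) * y j = ∏ k, h j k (y k) := by
    intro j y
    rw [hprod j (fun k => y k), hnorm]
  -- integrability of each coordinate integrand
  have hgint : ∀ j, Integrable (fun y : EuclideanSpace ℝ (Fin d) =>
      (Real.exp (-‖y‖^2) * χ (y i)) * y j) := by
    intro j
    have hPi : Integrable (fun z : Fin d → ℝ => ∏ k, h j k (z k)) :=
      Integrable.fintype_prod (fun k => hint j k)
    have h2 := ((EuclideanSpace.volume_preserving_symm_measurableEquiv_toLp (ι := Fin d)).integrable_comp_emb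
      (MeasurableEquiv.measurableEmbedding _)).2 hPi
    have h3 : ((fun z : Fin d → ℝ => ∏ k, h j k (z k)) ∘
        ((MeasurableEquiv.toLp 2 (Fin d → ℝ)).symm))
        = fun y : EuclideanSpace ℝ (Fin d) => (Real.exp (-‖y‖^2) * χ (y i)) * y j := by
      funext y
      exact (hcomp j y).symm
    rwa [h3] at h2
  -- value of each coordinate integral
  have key : ∀ j, (∫ y : EuclideanSpace ℝ (Fin d), (Real.exp (-‖y‖^2) * χ (y i)) * y j)
      = if j = i then 1/2 * Real.sqrt π ^ (d-1) else 0 := by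
    intro j
    have step1 : (∫ y : EuclideanSpace ℝ (Fin d), (Real.exp (-‖y‖^2) * χ (y i)) * y j)
        = ∫ z : Fin d → ℝ, ∏ k, h j k (z k) := by
      rw [← (EuclideanSpace.volume_preserving_symm_measurableEquiv_toLp (ι := Fin d)).integral_comp'
        (fun z : Fin d → ℝ => ∏ k, h j k (z k))]
      congr 1
      funext y
      exact hcomp j y
    rw [step1, MeasureTheory.volume_pi, MeasureTheory.integral_fintype_prod_eq_prod (h j)]
    by_cases hji : j = i
    · subst hji
      rw [if_pos rfl]
      have hterm : ∀ k, (∫ t, h j k t) = if k = j then 1/2 else Real.sqrt π := by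
        intro k
        rw [hval j k]
        split_ifs with h1 h2 <;> tauto
      rw [Finset.prod_congr rfl (fun k _ => hterm k),
        ← Finset.mul_prod_erase Finset.univ _ (Finset.mem_univ j), if_pos rfl,
        Finset.prod_congr rfl (fun k hk => if_neg (Finset.ne_of_mem_erase hk)),
        Finset.prod_const, Finset.card_erase_of_mem (Finset.mem_univ j), Finset.card_univ,
        Fintype.card_fin]
    · rw [if_neg hji]
      refine Finset.prod_eq_zero (Finset.mem_univ j) ?_
      rw [hval j j]
      simp [hji]
  -- expand the vector integrand in coordinates
  have hi : ∀ y : EuclideanSpace ℝ (Fin d),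
      (Real.exp (-‖y‖^2) * χ (y i)) • y
        = ∑ j, ((Real.exp (-‖y‖^2) * χ (y i)) * y j) • EuclideanSpace.single j (1:ℝ) := by
    intro y
    have hy : ∑ j, y j • EuclideanSpace.single j (1:ℝ) = y := by
      have hb := (EuclideanSpace.basisFun (Fin d) ℝ).sum_repr y
      simpa [EuclideanSpace.basisFun_apply, EuclideanSpace.basisFun_repr] using hb
    refine Eq.symm ?_
    calc ∑ j, ((Real.exp (-‖y‖^2) * χ (y i)) * y j) • EuclideanSpace.single j (1:ℝ)
        = (Real.exp (-‖y‖^2) * χ (y i)) • ∑ j, y j • EuclideanSpace.single j (1:ℝ) := by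
          rw [Finset.smul_sum]
          exact Finset.sum_congr rfl fun j _ => (smul_smul _ _ _).symm
      _ = (Real.exp (-‖y‖^2) * χ (y i)) • y := by rw [hy]
  calc ∫ y : EuclideanSpace ℝ (Fin d), (Real.exp (-‖y‖^2) * χ (y i)) • y
      = ∫ y : EuclideanSpace ℝ (Fin d),
          ∑ j, ((Real.exp (-‖y‖^2) * χ (y i)) * y j) • EuclideanSpace.single j (1:ℝ) := by
        simp_rw [hi]
    _ = ∑ j, ∫ y : EuclideanSpace ℝ (Fin d),
          ((Real.exp (-‖y‖^2) * χ (y i)) * y j) • EuclideanSpace.single j (1:ℝ) :=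
        integral_finset_sum _ (fun j _ => (hgint j).smul_const _)
    _ = ∑ j, (∫ y : EuclideanSpace ℝ (Fin d),
          (Real.exp (-‖y‖^2) * χ (y i)) * y j) • EuclideanSpace.single j (1:ℝ) :=
        Finset.sum_congr rfl fun j _ => integral_smul_const _ _
    _ = (Real.sqrt π ^ (d-1) / 2) • EuclideanSpace.single i (1:ℝ) := by
        rw [Finset.sum_eq_single i]
        · rw [key i, if_pos rfl]
          ring_nf
        · intro j _ hj
          rw [key j, if_neg hj, zero_smul]
        · intro hmem
          exact absurd (Finset.mem_univ i) hmem

lemma gauss_rot (d : ℕ) (hd : 2 ≤ d) (θ : EuclideanSpace ℝ (Fin d)) (hθ : ‖θ‖ = 1) :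
    ∫ x : EuclideanSpace ℝ (Fin d),
        (Real.exp (-‖x‖^2) * (if (0:ℝ) ≤ inner ℝ θ x then (1:ℝ) else 0)) • x
      = (Real.sqrt π ^ (d-1) / 2) • θ := by
  classical
  set i₀ : Fin d := ⟨0, by omega⟩ with hi₀
  have hON : Orthonormal ℝ (({i₀} : Set (Fin d)).restrict (fun _ => θ)) := by
    refine ⟨fun i => hθ, fun {i j} hij => absurd ?_ hij⟩
    exact Subtype.ext ((Set.eq_of_mem_singleton i.2).trans
      (Set.eq_of_mem_singleton j.2).symm)
  have hcard : Module.finrank ℝ (EuclideanSpace ℝ (Fin d)) = Fintype.card (Fin d) := by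
    rw [finrank_euclideanSpace]
  obtain ⟨b, hb⟩ := hON.exists_orthonormalBasis_extension_of_card_eq hcard
  have hbθ : b i₀ = θ := hb i₀ rfl
  set e := b.repr with he
  have hinner : ∀ x : EuclideanSpace ℝ (Fin d), (inner ℝ θ x : ℝ) = e x i₀ := by
    intro x
    rw [← hbθ, ← e.inner_map_map (b i₀) x, OrthonormalBasis.repr_self,
      EuclideanSpace.inner_single_left]
    simp
  have hnorm : ∀ x : EuclideanSpace ℝ (Fin d), ‖x‖ = ‖e x‖ := fun x => (e.norm_map x).symm
  calc ∫ x : EuclideanSpace ℝ (Fin d),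
        (Real.exp (-‖x‖^2) * (if (0:ℝ) ≤ inner ℝ θ x then (1:ℝ) else 0)) • x
      = ∫ x : EuclideanSpace ℝ (Fin d), e.symm
          ((Real.exp (-‖e x‖^2) * (if (0:ℝ) ≤ e x i₀ then (1:ℝ) else 0)) • e x) := by
        congr 1
        funext x
        rw [_root_.map_smul, e.symm_apply_apply, ← hnorm, ← hinner]
    _ = e.symm (∫ x : EuclideanSpace ℝ (Fin d),
          (Real.exp (-‖e x‖^2) * (if (0:ℝ) ≤ e x i₀ then (1:ℝ) else 0)) • e x) :=
        e.symm.toLinearIsometry.integral_comp_comm _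
    _ = e.symm (∫ y : EuclideanSpace ℝ (Fin d),
          (Real.exp (-‖y‖^2) * (if (0:ℝ) ≤ y i₀ then (1:ℝ) else 0)) • y) := by
        congr 1
        have hcoe : ∀ x, e x = b.measurableEquiv x := fun x => rfl
        simp_rw [hcoe]
        exact b.measurePreserving_measurableEquiv.integral_comp'
          (fun y => (Real.exp (-‖y‖^2) * (if (0:ℝ) ≤ y i₀ then (1:ℝ) else 0)) • y)
    _ = e.symm ((Real.sqrt π ^ (d-1) / 2) • EuclideanSpace.single i₀ (1:ℝ)) := by
        rw [gauss_euclid d i₀]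
    _ = (Real.sqrt π ^ (d-1) / 2) • θ := by
        rw [_root_.map_smul, ← hbθ, ← OrthonormalBasis.repr_self b i₀, he, e.symm_apply_apply]

lemma polar (d : ℕ) (hd : 2 ≤ d) (θ : EuclideanSpace ℝ (Fin d)) :
    ∫ x : EuclideanSpace ℝ (Fin d),
        (Real.exp (-‖x‖^2) * (if (0:ℝ) ≤ inner ℝ θ x then (1:ℝ) else 0)) • x
      = (Real.Gamma (((d:ℝ)+1)/2) / 2) •
        ∫ q : sphere (0 : EuclideanSpace ℝ (Fin d)) 1,
          (if (0:ℝ) ≤ inner ℝ θ (q : EuclideanSpace ℝ (Fin d)) then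
            (q : EuclideanSpace ℝ (Fin d)) else 0)
          ∂((volume : Measure (EuclideanSpace ℝ (Fin d))).toSphere) := by
  classical
  haveI : Nontrivial (EuclideanSpace ℝ (Fin d)) := Module.nontrivial_of_finrank_pos (R := ℝ)
    (by rw [finrank_euclideanSpace, Fintype.card_fin]; omega)
  set F : EuclideanSpace ℝ (Fin d) → EuclideanSpace ℝ (Fin d) := fun x =>
    (Real.exp (-‖x‖^2) * (if (0:ℝ) ≤ inner ℝ θ x then (1:ℝ) else 0)) • x with hF
  set f₀ : sphere (0 : EuclideanSpace ℝ (Fin d)) 1 → EuclideanSpace ℝ (Fin d) := fun q =>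
    (if (0:ℝ) ≤ inner ℝ θ (q : EuclideanSpace ℝ (Fin d)) then
      (q : EuclideanSpace ℝ (Fin d)) else 0) with hf₀
  set g : (sphere (0 : EuclideanSpace ℝ (Fin d)) 1) × (Set.Ioi (0:ℝ)) →
      EuclideanSpace ℝ (Fin d) := fun z =>
    ((z.2 : ℝ) * Real.exp (-(z.2 : ℝ)^2)) • f₀ z.1 with hg
  have h1 : ∫ x : ({0}ᶜ : Set (EuclideanSpace ℝ (Fin d))), F x
        ∂((volume : Measure (EuclideanSpace ℝ (Fin d))).comap Subtype.val)
      = ∫ x, F x ∂(volume : Measure (EuclideanSpace ℝ (Fin d))) := by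
    rw [integral_subtype_comap (measurableSet_singleton 0).compl,
      restrict_compl_singleton]
  have h2 : ∀ x : ({0}ᶜ : Set (EuclideanSpace ℝ (Fin d))), F x
      = g (homeomorphUnitSphereProd (EuclideanSpace ℝ (Fin d)) x) := by
    rintro ⟨x, hx⟩
    have hx0 : x ≠ 0 := hx
    have hnx : (0:ℝ) < ‖x‖ := norm_pos_iff.2 hx0
    simp only [hg, hF, hf₀, homeomorphUnitSphereProd_apply_fst_coe,
      homeomorphUnitSphereProd_apply_snd_coe]
    rw [real_inner_smul_right]
    have hiff : (0 ≤ ‖x‖⁻¹ * inner ℝ θ x) ↔ (0 ≤ (inner ℝ θ x : ℝ)) :=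
      mul_nonneg_iff_of_pos_left (inv_pos.2 hnx)
    rw [if_congr hiff rfl rfl]
    split_ifs with h'
    · rw [smul_smul, mul_one, mul_comm ‖x‖, mul_assoc, mul_inv_cancel₀ hnx.ne', mul_one]
    · rw [mul_zero, zero_smul, smul_zero]
  have h3 : ∫ x : ({0}ᶜ : Set (EuclideanSpace ℝ (Fin d))), F x
        ∂((volume : Measure (EuclideanSpace ℝ (Fin d))).comap Subtype.val)
      = ∫ z, g z ∂(((volume : Measure (EuclideanSpace ℝ (Fin d))).toSphere).prod
          (MeasureTheory.Measure.volumeIoiPow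
            (Module.finrank ℝ (EuclideanSpace ℝ (Fin d)) - 1))) := by
    rw [show (fun x : ({0}ᶜ : Set (EuclideanSpace ℝ (Fin d))) => F (x : EuclideanSpace ℝ (Fin d)))
      = fun x => g (homeomorphUnitSphereProd (EuclideanSpace ℝ (Fin d)) x) from funext h2]
    exact ((volume : Measure (EuclideanSpace ℝ (Fin d))).measurePreserving_homeomorphUnitSphereProd).integral_comp
      (Homeomorph.measurableEmbedding _) g
  have h4 : ∫ z, g z ∂(((volume : Measure (EuclideanSpace ℝ (Fin d))).toSphere).prod
          (MeasureTheory.Measure.volumeIoiPow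
            (Module.finrank ℝ (EuclideanSpace ℝ (Fin d)) - 1)))
      = (∫ r : Set.Ioi (0:ℝ), (r:ℝ) * Real.exp (-(r:ℝ)^2)
          ∂(MeasureTheory.Measure.volumeIoiPow
            (Module.finrank ℝ (EuclideanSpace ℝ (Fin d)) - 1)))
        • (∫ q, f₀ q ∂((volume : Measure (EuclideanSpace ℝ (Fin d))).toSphere)) := by
    rw [← integral_prod_swap g]
    exact integral_prod_smul (fun r : Set.Ioi (0:ℝ) => (r:ℝ) * Real.exp (-(r:ℝ)^2)) f₀
  have h5 : (∫ r : Set.Ioi (0:ℝ), (r:ℝ) * Real.exp (-(r:ℝ)^2)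
        ∂(MeasureTheory.Measure.volumeIoiPow
          (Module.finrank ℝ (EuclideanSpace ℝ (Fin d)) - 1)))
      = Real.Gamma (((d:ℝ)+1)/2) / 2 := by
    rw [integral_volumeIoiPow _ (fun t => t * Real.exp (-t^2)),
      show Module.finrank ℝ (EuclideanSpace ℝ (Fin d)) - 1 = d - 1 by
        rw [finrank_euclideanSpace, Fintype.card_fin]]
    exact int5 d (by omega)
  rw [← h1, h3, h4, h5]

/-- The uniform (rotation-invariant) probability measure on the unit sphere
`S^{d-1} ⊆ ℝ^d`. -/
noncomputable def uniformSphere (d : ℕ) :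
    Measure (sphere (0 : EuclideanSpace ℝ (Fin d)) 1) :=
  ((volume : Measure (EuclideanSpace ℝ (Fin d))).toSphere Set.univ)⁻¹ •
    (volume : Measure (EuclideanSpace ℝ (Fin d))).toSphere

/-- for a unit vector `θ ∈ ℝ^d`, the integral over the unit sphere
(uniform probability measure) of `q ↦ 1{⟨θ,q⟩ ≥ 0} • q` equals `c_d • θ` with
`c_d = Γ(d/2) / (2√π · Γ((d+1)/2))`. -/
theorem stmt0 (d : ℕ) (hd : 2 ≤ d) (θ : EuclideanSpace ℝ (Fin d)) (hθ : ‖θ‖ = 1) :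
    (∫ q : sphere (0 : EuclideanSpace ℝ (Fin d)) 1,
        (if (0 : ℝ) ≤ inner ℝ θ (q : EuclideanSpace ℝ (Fin d)) then
          (q : EuclideanSpace ℝ (Fin d)) else 0) ∂(uniformSphere d)) =
      (Real.Gamma ((d : ℝ) / 2) / (2 * Real.sqrt π * Real.Gamma (((d : ℝ) + 1) / 2))) • θ := by
  haveI : Nonempty (Fin d) := ⟨⟨0, by omega⟩⟩
  haveI : Nontrivial (EuclideanSpace ℝ (Fin d)) := Module.nontrivial_of_finrank_pos (R := ℝ)
    (by rw [finrank_euclideanSpace, Fintype.card_fin]; omega)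
  have hΓpos : 0 < Real.Gamma (((d:ℝ)+1)/2) := Real.Gamma_pos_of_pos (by positivity)
  have hD : (0:ℝ) < (d:ℝ) := by
    have h0 : 0 < d := by omega
    exact_mod_cast h0
  have hΓpos2 : 0 < Real.Gamma ((d:ℝ)/2) := Real.Gamma_pos_of_pos (by positivity)
  have hs : (0:ℝ) < Real.sqrt π := Real.sqrt_pos.2 Real.pi_pos
  have hK : (Real.Gamma (((d:ℝ)+1)/2) / 2) ≠ 0 := by positivity
  have hkey : (Real.Gamma (((d:ℝ)+1)/2) / 2) •
      (∫ q : sphere (0 : EuclideanSpace ℝ (Fin d)) 1,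
        (if (0 : ℝ) ≤ inner ℝ θ (q : EuclideanSpace ℝ (Fin d)) then
          (q : EuclideanSpace ℝ (Fin d)) else 0)
        ∂((volume : Measure (EuclideanSpace ℝ (Fin d))).toSphere))
      = (Real.sqrt π ^ (d-1) / 2) • θ := by
    rw [← polar d hd θ, gauss_rot d hd θ hθ]
  have hA : (∫ q : sphere (0 : EuclideanSpace ℝ (Fin d)) 1,
        (if (0 : ℝ) ≤ inner ℝ θ (q : EuclideanSpace ℝ (Fin d)) then
          (q : EuclideanSpace ℝ (Fin d)) else 0)
        ∂((volume : Measure (EuclideanSpace ℝ (Fin d))).toSphere))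
      = ((Real.Gamma (((d:ℝ)+1)/2) / 2)⁻¹ * (Real.sqrt π ^ (d-1) / 2)) • θ := by
    rw [mul_smul, ← hkey, inv_smul_smul₀ hK]
  have hμ : (volume : Measure (EuclideanSpace ℝ (Fin d))).toSphere Set.univ
      = (d : ℝ≥0∞) * ENNReal.ofReal
          (Real.sqrt π ^ d / Real.Gamma ((d:ℝ)/2 + 1)) := by
    rw [MeasureTheory.Measure.toSphere_apply_univ, EuclideanSpace.volume_ball (Fin d) 0 1]
    simp [finrank_euclideanSpace, Fintype.card_fin]
  rw [uniformSphere, integral_smul_measure, hA, hμ, ENNReal.toReal_inv, ENNReal.toReal_mul,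
    ENNReal.toReal_natCast, ENNReal.toReal_ofReal (by positivity), smul_smul]
  congr 1
  have hΓ1 : Real.Gamma ((d:ℝ)/2 + 1) = ((d:ℝ)/2) * Real.Gamma ((d:ℝ)/2) :=
    Real.Gamma_add_one (by positivity)
  have hpow : Real.sqrt π ^ d = Real.sqrt π ^ (d-1) * Real.sqrt π := by
    conv_lhs => rw [← Nat.sub_add_cancel (le_trans one_le_two hd), pow_succ]
  rw [hΓ1, hpow]
  have hp : (0:ℝ) < Real.sqrt π ^ (d-1) := by positivity
  field_simp
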